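/- In the inductive renormalization step, suppose ⟦S_n,S_n⟧ = O(ħ^{n+1}), ⟦S,Γ_{n,div}^{(n+1)}⟧ = (1/2)⟦S_n,S_n⟧ + O(ħ^{n+2}), and S_n = S + O(ħ). Define S_{n+1} = S_n − Γ_{n,div}^{(n+1)} with Γ_{n,div}^{(n+1)} = O(ħ^{n+1}). Then ⟦S_{n+1},S_{n+1}⟧ = O(ħ^{n+2}). -/
import Mathlib


/-- inductive renormalization step.  In a ring of formal power
series in `ħ` (modeled by a filtration `O k` of "order at least `ħ^k`"
submodules), if `⟦S_n,S_n⟧ = O(ħ^{n+1})`,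
`⟦S,Γ_div⟧ = (1/2)⟦S_n,S_n⟧ + O(ħ^{n+2})`, `S_n = S + O(ħ)` and
`Γ_div = O(ħ^{n+1})`, then `S_{n+1} := S_n − Γ_div` satisfies
`⟦S_{n+1},S_{n+1}⟧ = O(ħ^{n+2})`. -/
theorem stmt4 {M : Type*} [AddCommGroup M] [Module ℚ M]
    (br : M →ₗ[ℚ] M →ₗ[ℚ] M)
    (symm : ∀ X Y : M, br X Y = br Y X)
    (O : ℕ → Submodule ℚ M)
    (Oanti : ∀ k l : ℕ, k ≤ l → O l ≤ O k)
    (Obr : ∀ (k l : ℕ) (X Y : M), X ∈ O k → Y ∈ O l → br X Y ∈ O (k + l))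
    (n : ℕ) (S Sn Γdiv : M)
    (h1 : br Sn Sn ∈ O (n + 1))
    (h2 : br S Γdiv - (1 / 2 : ℚ) • br Sn Sn ∈ O (n + 2))
    (h3 : Sn - S ∈ O 1)
    (h4 : Γdiv ∈ O (n + 1)) :
    br (Sn - Γdiv) (Sn - Γdiv) ∈ O (n + 2) := by
  have e : br (Sn - Γdiv) (Sn - Γdiv) =
      (-2 : ℚ) • (br S Γdiv - (1 / 2 : ℚ) • br Sn Sn)
      + (-2 : ℚ) • br (Sn - S) Γdiv + br Γdiv Γdiv := by
    simp only [map_sub, LinearMap.sub_apply, smul_sub, symm Γdiv Sn, symm Γdiv S]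
    module
  rw [e]
  refine Submodule.add_mem _ (Submodule.add_mem _ ?_ ?_) ?_
  · exact Submodule.smul_mem _ _ h2
  · exact Submodule.smul_mem _ _ (by have h := Obr 1 (n + 1) _ _ h3 h4; rwa [show 1 + (n + 1) = n + 2 from by omega] at h)
  · exact Oanti (n + 2) (n + 1 + (n + 1)) (by omega) (Obr _ _ _ _ h4 h4)
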